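/- Let h : U' → P × P be a discrete horizontal lift, where U' = (id_P × π)(U) for a D-type set U ⊆ P × P, and write h₂ := pr₂ ∘ h. For (q₀,q₁) ∈ U define A_h(q₀,q₁) := κ(h₂(q₀,π(q₁)), q₁). Then h₂(q₀,π(q₁)) lies in the same G-orbit as q₁ (so A_h is well defined), and A_h is a discrete connection form with domain U: A_h(q,q) = e for all q ∈ P, and A_h(g₀ • q₀, g₁ • q₁) = g₁ · A_h(q₀,q₁) · g₀⁻¹ for all (q₀,q₁) ∈ U and g₀,g₁ ∈ G. -/
import Mathlib


/-- given a discrete horizontal lift `h` with domain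
`U' = (id × π)(U)`, the map `A_h(q₀,q₁) := κ(h₂(q₀,π(q₁)), q₁)` is well defined
(`h₂(q₀,π(q₁))` lies in the orbit of `q₁`) and is a discrete connection form with
domain `U`. -/
theorem discrete_horizontal_lift_gives_connection_form
    {G : Type*} [Group G] {P : Type*} [MulAction G P] {B : Type*}
    (π : P → B)
    (hfree : ∀ (g : G) (q : P), g • q = q → g = 1)
    (hπ : ∀ q₀ q₁ : P, π q₀ = π q₁ ↔ ∃ g : G, g • q₀ = q₁)
    (κ : P → P → G)
    (hκ : ∀ q₀ q₁ : P, π q₀ = π q₁ → κ q₀ q₁ • q₀ = q₁)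
    (U : Set (P × P))
    (hUinv : ∀ q₀ q₁ : P, (q₀, q₁) ∈ U → ∀ g₀ g₁ : G, (g₀ • q₀, g₁ • q₁) ∈ U)
    (hUvert : ∀ q₀ q₁ : P, π q₀ = π q₁ → (q₀, q₁) ∈ U)
    (U' : Set (P × B))
    (hU' : U' = {x : P × B | ∃ q₁ : P, (x.1, q₁) ∈ U ∧ π q₁ = x.2})
    (h : P → B → P × P)
    (hhequiv : ∀ q r, (q, r) ∈ U' → ∀ g : G,
      h (g • q) r = (g • (h q r).1, g • (h q r).2))
    (hhsec : ∀ q r, (q, r) ∈ U' → (h q r).1 = q ∧ π ((h q r).2) = r)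
    (hhnorm : ∀ q : P, h q (π q) = (q, q)) :
    -- well-definedness of `A_h`: `h₂(q₀, π(q₁))` is in the same orbit as `q₁`
    (∀ q₀ q₁ : P, (q₀, q₁) ∈ U → π ((h q₀ (π q₁)).2) = π q₁) ∧
    -- `A_h(q,q) = e`
    (∀ q : P, κ ((h q (π q)).2) q = 1) ∧
    -- equivariance of `A_h`
    (∀ q₀ q₁ : P, (q₀, q₁) ∈ U → ∀ g₀ g₁ : G,
      κ ((h (g₀ • q₀) (π (g₁ • q₁))).2) (g₁ • q₁)
        = g₁ * κ ((h q₀ (π q₁)).2) q₁ * g₀⁻¹) := by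
  have hmem : ∀ q₀ q₁ : P, (q₀, q₁) ∈ U → (q₀, π q₁) ∈ U' := by
    intro q₀ q₁ hU01
    rw [hU']; exact ⟨q₁, hU01, rfl⟩
  have hwd : ∀ q₀ q₁ : P, (q₀, q₁) ∈ U → π ((h q₀ (π q₁)).2) = π q₁ := by
    intro q₀ q₁ hU01
    exact (hhsec q₀ (π q₁) (hmem q₀ q₁ hU01)).2
  refine ⟨hwd, ?_, ?_⟩
  · intro q
    rw [hhnorm q]
    exact hfree _ _ (hκ q q rfl)
  · intro q₀ q₁ hU01 g₀ g₁
    have hπg : π (g₁ • q₁) = π q₁ := ((hπ q₁ (g₁ • q₁)).2 ⟨g₁, rfl⟩).symm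
    rw [hπg, hhequiv q₀ (π q₁) (hmem q₀ q₁ hU01) g₀]
    set x := (h q₀ (π q₁)).2 with hx
    have h1 : π x = π q₁ := hwd q₀ q₁ hU01
    have h2 : κ x q₁ • x = q₁ := hκ x q₁ h1
    have h3 : π (g₀ • x) = π (g₁ • q₁) := by
      rw [hπg]
      rw [(hπ x (g₀ • x)).2 ⟨g₀, rfl⟩] at h1
      exact h1
    have h4 : κ (g₀ • x) (g₁ • q₁) • (g₀ • x) = g₁ • q₁ := hκ _ _ h3
    have h5 : (g₁ * κ x q₁ * g₀⁻¹) • (g₀ • x) = g₁ • q₁ := by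
      rw [smul_smul, mul_assoc, inv_mul_cancel, mul_one, mul_smul, h2]
    have := hfree ((g₁ * κ x q₁ * g₀⁻¹)⁻¹ * κ (g₀ • x) (g₁ • q₁)) (g₀ • x) (by
      rw [mul_smul, h4, ← h5, inv_smul_smul])
    exact (inv_mul_eq_one.mp this).symm
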